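/- Let E₁ be a nonempty set, N ≥ 1 an integer, β > 0, let U : E₁ → ℝ be bounded, and let W : E₁ × E₁ → ℝ be bounded and symmetric. For x ∈ E₁^N define U_N(x) = Σ_{i=1}^N ( U(x_i) + (1/(2N)) Σ_{j≠i} W(x_i, x_j) ), and for i and y ∈ E₁ set p_i(x,y) = min(1, exp(β (U_N(x) − U_N(x^{i→y})))), where x^{i→y} replaces the i-th coordinate of x by y. Then for all i, all y ∈ E₁, and all x, z ∈ E₁^N with x_i = z_i, |p_i(x,y) − p_i(z,y)| ≤ 2 osc(W) β e^{β(osc(U)+osc(W))} · d̄₁(x,z)/N, where d̄₁(x,z) = 2·#{j : x_j ≠ z_j} and osc(f) = sup f − inf f. -/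
import Mathlib


open Finset

/-- The oscillation `osc f = sup f - inf f` of a real-valued function. -/
noncomputable def oscOf {α : Type*} (f : α → ℝ) : ℝ :=
  sSup (Set.range f) - sInf (Set.range f)

/-- The mean-field energy
`U_N(x) = ∑_i ( U(x_i) + (1/(2N)) ∑_{j ≠ i} W(x_i, x_j) )`. -/
noncomputable def meanFieldEnergy {E₁ : Type*} (N : ℕ) (U : E₁ → ℝ) (W : E₁ → E₁ → ℝ)
    (x : Fin N → E₁) : ℝ :=
  ∑ i, (U (x i) + (1 / (2 * (N : ℝ))) * ∑ j ∈ Finset.univ.erase i, W (x i) (x j))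

/-- The Metropolis–Hastings acceptance probability
`p_i(x,y) = min(1, exp(β (U_N(x) - U_N(x^{i→y}))))` for moving the `i`-th particle to `y`. -/
noncomputable def mhAccept {E₁ : Type*} (N : ℕ) (β : ℝ) (U : E₁ → ℝ) (W : E₁ → E₁ → ℝ)
    (i : Fin N) (x : Fin N → E₁) (y : E₁) : ℝ :=
  min 1 (Real.exp (β * (meanFieldEnergy N U W x -
    meanFieldEnergy N U W (Function.update x i y))))

lemma abs_sub_le_osc {α : Type*} (f : α → ℝ) (ha : BddAbove (Set.range f))
    (hb : BddBelow (Set.range f)) (p q : α) : |f p - f q| ≤ oscOf f := by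
  have h1 : f p ≤ sSup (Set.range f) := le_csSup ha ⟨p, rfl⟩
  have h2 : f q ≤ sSup (Set.range f) := le_csSup ha ⟨q, rfl⟩
  have h3 : sInf (Set.range f) ≤ f p := csInf_le hb ⟨p, rfl⟩
  have h4 : sInf (Set.range f) ≤ f q := csInf_le hb ⟨q, rfl⟩
  rw [abs_sub_le_iff]
  unfold oscOf
  constructor <;> linarith

lemma min_exp_mono {a b : ℝ} (h : a ≤ b) :
    min 1 (Real.exp b) - min 1 (Real.exp a) ≤ b - a := by
  by_cases hb : b ≤ 0
  · have hea : Real.exp a ≤ 1 := Real.exp_le_one_iff.mpr (h.trans hb)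
    have heb : Real.exp b ≤ 1 := Real.exp_le_one_iff.mpr hb
    rw [min_eq_right hea, min_eq_right heb]
    have hx : Real.exp a = Real.exp b * Real.exp (a - b) := by
      rw [← Real.exp_add]; ring_nf
    have h1 : (a - b) + 1 ≤ Real.exp (a - b) := Real.add_one_le_exp _
    have h2 : (0:ℝ) < Real.exp b := Real.exp_pos b
    nlinarith
  · push_neg at hb
    rw [min_eq_left (Real.one_le_exp hb.le)]
    by_cases ha : a ≤ 0
    · rw [min_eq_right (Real.exp_le_one_iff.mpr ha)]
      have h1 : a + 1 ≤ Real.exp a := Real.add_one_le_exp a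
      linarith
    · push_neg at ha
      rw [min_eq_left (Real.one_le_exp ha.le)]
      linarith

lemma min_exp_lip (a b : ℝ) :
    |min 1 (Real.exp a) - min 1 (Real.exp b)| ≤ |a - b| := by
  rcases le_total a b with h | h
  · have h1 := min_exp_mono h
    have h2 : min 1 (Real.exp a) ≤ min 1 (Real.exp b) :=
      min_le_min le_rfl (Real.exp_le_exp.mpr h)
    rw [abs_sub_comm, abs_of_nonneg (by linarith), abs_sub_comm, abs_of_nonneg (by linarith)]
    linarith
  · have h1 := min_exp_mono h
    have h2 : min 1 (Real.exp b) ≤ min 1 (Real.exp a) :=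
      min_le_min le_rfl (Real.exp_le_exp.mpr h)
    rw [abs_of_nonneg (by linarith), abs_of_nonneg (by linarith)]
    linarith

lemma energy_diff {E₁ : Type*} (N : ℕ) (U : E₁ → ℝ) (W : E₁ → E₁ → ℝ)
    (i : Fin N) (x : Fin N → E₁) (y : E₁) :
    meanFieldEnergy N U W x - meanFieldEnergy N U W (Function.update x i y) =
      (U (x i) - U y) + (1 / (2 * (N : ℝ))) *
        ∑ j ∈ Finset.univ.erase i,
          ((W (x i) (x j) - W y (x j)) + (W (x j) (x i) - W (x j) y)) := by
  classical
  set c : ℝ := 1 / (2 * (N : ℝ)) with hc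
  have key : ∀ k : Fin N,
      (U (x k) + c * ∑ j ∈ Finset.univ.erase k, W (x k) (x j))
      - (U (Function.update x i y k) + c * ∑ j ∈ Finset.univ.erase k,
          W (Function.update x i y k) (Function.update x i y j))
      = if k = i then
          (U (x i) - U y) + c * ∑ j ∈ Finset.univ.erase i, (W (x i) (x j) - W y (x j))
        else c * (W (x k) (x i) - W (x k) y) := by
    intro k
    by_cases hk : k = i
    · subst hk
      simp only [eq_self_iff_true, if_true, Function.update_self]
      have hs : ∑ j ∈ Finset.univ.erase k, W y (Function.update x k y j)
          = ∑ j ∈ Finset.univ.erase k, W y (x j) :=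
        Finset.sum_congr rfl fun j hj => by
          rw [Function.update_of_ne (Finset.ne_of_mem_erase hj)]
      rw [hs, Finset.sum_sub_distrib]
      ring
    · simp only [if_neg hk, Function.update_of_ne hk]
      have hs : ∑ j ∈ Finset.univ.erase k,
          (W (x k) (x j) - W (x k) (Function.update x i y j)) = W (x k) (x i) - W (x k) y := by
        rw [Finset.sum_eq_single i]
        · rw [Function.update_self]
        · intro j _ hji
          rw [Function.update_of_ne hji, sub_self]
        · intro h
          exact absurd (Finset.mem_erase.mpr ⟨fun h' => hk h'.symm, Finset.mem_univ i⟩) h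
      rw [← hs, Finset.sum_sub_distrib]
      ring
  unfold meanFieldEnergy
  rw [← Finset.sum_sub_distrib]
  calc (∑ k, ((U (x k) + c * ∑ j ∈ Finset.univ.erase k, W (x k) (x j))
      - (U (Function.update x i y k) + c * ∑ j ∈ Finset.univ.erase k,
          W (Function.update x i y k) (Function.update x i y j))))
      = ∑ k, (if k = i then
          (U (x i) - U y) + c * ∑ j ∈ Finset.univ.erase i, (W (x i) (x j) - W y (x j))
        else c * (W (x k) (x i) - W (x k) y)) := Finset.sum_congr rfl fun k _ => key k
    _ = ((U (x i) - U y) + c * ∑ j ∈ Finset.univ.erase i, (W (x i) (x j) - W y (x j)))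
        + ∑ k ∈ Finset.univ.erase i, c * (W (x k) (x i) - W (x k) y) := by
        rw [← Finset.add_sum_erase _ _ (Finset.mem_univ i), if_pos rfl]
        congr 1
        exact Finset.sum_congr rfl fun k hk => by
          rw [if_neg (Finset.ne_of_mem_erase hk)]
    _ = (U (x i) - U y) + c * ∑ j ∈ Finset.univ.erase i,
          ((W (x i) (x j) - W y (x j)) + (W (x j) (x i) - W (x j) y)) := by
        simp only [mul_add, Finset.mul_sum, Finset.sum_add_distrib]
        ring

/-- Lipschitz estimate for the Metropolis–Hastings acceptance probability in the
configuration of the other particles: if `x_i = z_i` then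
`|p_i(x,y) - p_i(z,y)| ≤ 2 osc(W) β e^{β(osc U + osc W)} d̄₁(x,z)/N`, with
`d̄₁(x,z) = 2 #{j : x_j ≠ z_j}`. -/
theorem mhAccept_lipschitz {E₁ : Type*} [Nonempty E₁] (N : ℕ) (hN : 1 ≤ N)
    (β : ℝ) (hβ : 0 < β)
    (U : E₁ → ℝ) (hUa : BddAbove (Set.range U)) (hUb : BddBelow (Set.range U))
    (W : E₁ → E₁ → ℝ)
    (hWa : BddAbove (Set.range fun p : E₁ × E₁ => W p.1 p.2))
    (hWb : BddBelow (Set.range fun p : E₁ × E₁ => W p.1 p.2))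
    (hWsymm : ∀ u v, W u v = W v u)
    (i : Fin N) (y : E₁) (x z : Fin N → E₁) (hxz : x i = z i) :
    |mhAccept N β U W i x y - mhAccept N β U W i z y| ≤
      2 * oscOf (fun p : E₁ × E₁ => W p.1 p.2) * β *
        Real.exp (β * (oscOf U + oscOf fun p : E₁ × E₁ => W p.1 p.2)) *
        ((2 * (Nat.card {j : Fin N // x j ≠ z j} : ℝ)) / N) := by
  classical
  set oscW : ℝ := oscOf (fun p : E₁ × E₁ => W p.1 p.2) with hoscW_def
  have hW2 : ∀ a b c d : E₁, |W a b - W c d| ≤ oscW := fun a b c d =>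
    abs_sub_le_osc (fun p : E₁ × E₁ => W p.1 p.2) hWa hWb (a, b) (c, d)
  obtain ⟨e₀⟩ := ‹Nonempty E₁›
  have hoscW : 0 ≤ oscW := (abs_nonneg _).trans (hW2 e₀ e₀ e₀ e₀)
  have hoscU : 0 ≤ oscOf U := (abs_nonneg _).trans (abs_sub_le_osc U hUa hUb e₀ e₀)
  have hN' : (0:ℝ) < N := by exact_mod_cast hN
  set A : ℝ := β * (meanFieldEnergy N U W x -
    meanFieldEnergy N U W (Function.update x i y)) with hA
  set B : ℝ := β * (meanFieldEnergy N U W z -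
    meanFieldEnergy N U W (Function.update z i y)) with hB
  have hlip : |mhAccept N β U W i x y - mhAccept N β U W i z y| ≤ |A - B| :=
    min_exp_lip A B
  set g : Fin N → ℝ := fun j =>
    ((W (z i) (x j) - W y (x j)) + (W (x j) (z i) - W (x j) y))
    - ((W (z i) (z j) - W y (z j)) + (W (z j) (z i) - W (z j) y)) with hg
  have hD : A - B = β * ((1 / (2 * (N : ℝ))) * ∑ j ∈ Finset.univ.erase i, g j) := by
    rw [hA, hB, energy_diff, energy_diff, hxz]
    simp only [hg, Finset.sum_sub_distrib]
    ring
  have hg0 : ∀ j, x j = z j → g j = 0 := by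
    intro j hj; simp only [hg]; rw [hj]; ring
  have hgb : ∀ j, |g j| ≤ 4 * oscW := by
    intro j
    have h1 := hW2 (z i) (x j) (z i) (z j)
    have h2 := hW2 y (z j) y (x j)
    have h3 := hW2 (x j) (z i) (z j) (z i)
    have h4 := hW2 (z j) y (x j) y
    have he : g j = ((W (z i) (x j) - W (z i) (z j)) + (W y (z j) - W y (x j)))
        + ((W (x j) (z i) - W (z j) (z i)) + (W (z j) y - W (x j) y)) := by
      simp only [hg]; ring
    rw [he, abs_le]
    rw [abs_le] at h1 h2 h3 h4
    constructor <;> [linarith [h1.1, h2.1, h3.1, h4.1]; linarith [h1.2, h2.2, h3.2, h4.2]]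
  set m : ℝ := (Nat.card {j : Fin N // x j ≠ z j} : ℝ) with hm_def
  have hm0 : 0 ≤ m := by rw [hm_def]; positivity
  have hm : m = ((Finset.univ.filter (fun j => ¬ x j = z j)).card : ℝ) := by
    rw [hm_def, Nat.card_eq_fintype_card, Fintype.card_subtype]
  have hsum : |∑ j ∈ Finset.univ.erase i, g j| ≤ 4 * oscW * m := by
    calc |∑ j ∈ Finset.univ.erase i, g j| ≤ ∑ j ∈ Finset.univ.erase i, |g j| :=
          Finset.abs_sum_le_sum_abs _ _
      _ ≤ ∑ j ∈ Finset.univ.erase i, (if x j = z j then 0 else 4 * oscW) := by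
          apply Finset.sum_le_sum
          intro j _
          by_cases hj : x j = z j
          · simp [hg0 j hj, hj]
          · rw [if_neg hj]; exact hgb j
      _ ≤ ∑ j, (if x j = z j then 0 else 4 * oscW) := by
          apply Finset.sum_le_sum_of_subset_of_nonneg (Finset.erase_subset _ _)
          intro j _ _
          by_cases hj : x j = z j
          · simp [hj]
          · rw [if_neg hj]; positivity
      _ = ((Finset.univ.filter (fun j => ¬ x j = z j)).card : ℝ) * (4 * oscW) := by
          rw [Finset.sum_ite, Finset.sum_const, Finset.sum_const]
          simp
      _ = 4 * oscW * m := by rw [hm]; ring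
  have habs : |A - B| ≤ 2 * β * oscW * m / N := by
    rw [hD, abs_mul, abs_mul, abs_of_pos hβ,
      abs_of_nonneg (by positivity : (0:ℝ) ≤ 1 / (2 * (N:ℝ)))]
    have : β * (1 / (2 * (N:ℝ)) * |∑ j ∈ Finset.univ.erase i, g j|)
        ≤ β * (1 / (2 * (N:ℝ)) * (4 * oscW * m)) := by
      apply mul_le_mul_of_nonneg_left _ hβ.le
      exact mul_le_mul_of_nonneg_left hsum (by positivity)
    calc β * (1 / (2 * (N:ℝ)) * |∑ j ∈ Finset.univ.erase i, g j|)
        ≤ β * (1 / (2 * (N:ℝ)) * (4 * oscW * m)) := this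
      _ = 2 * β * oscW * m / N := by field_simp; ring
  have hE : 1 ≤ Real.exp (β * (oscOf U + oscW)) :=
    Real.one_le_exp (mul_nonneg hβ.le (add_nonneg hoscU hoscW))
  calc |mhAccept N β U W i x y - mhAccept N β U W i z y| ≤ |A - B| := hlip
    _ ≤ 2 * β * oscW * m / N := habs
    _ ≤ 2 * oscW * β * Real.exp (β * (oscOf U + oscW)) * ((2 * m) / N) := by
        rw [div_le_iff₀ hN']
        have h1 : 2 * oscW * β * Real.exp (β * (oscOf U + oscW)) * (2 * m / N) * N
            = 4 * oscW * β * Real.exp (β * (oscOf U + oscW)) * m := by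
          field_simp; ring
        rw [h1]
        nlinarith [mul_nonneg (mul_nonneg hβ.le hoscW) hm0]
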